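/- Let a = (a₁,…,a_m) ∈ {0,1}^m and let C ∈ Config_{n,m}. If C is locally correct and, for every j ∈ {1,…,m}, every cell of C whose state s satisfies coord(s) = (0,j) also satisfies a(s) = a_j, then C ∼ Table_φ(a). -/

import Mathlib

/-!
Cellular automata on bounded configurations (Durand / Kapytka setup).

A cell state has components (coord, flag, a, pd, pc, label), each possibly the
undefined value `□` (modelled by `Option`).  Configurations are maps
`ℤ × ℤ → CellState` that are quiescent exactly outside the rectangle
`[n+1] × [m+2]`.  A CNF formula `φ` is given by its clause–literal incidence:
`φ i j = some true` iff `x_j ∈ C_i`, `some false` iff `¬x_j ∈ C_i`,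
`none` iff neither occurs.
-/

namespace CA

structure CellState where
  coord : Option ℤ × Option ℤ
  flag  : Option ℤ
  aval  : Option Bool
  pd    : Option Bool
  pc    : Option Bool
  label : Option Bool
  deriving DecidableEq

/-- The quiescent state `q`: all components are `□`. -/
def qState : CellState := ⟨(none, none), none, none, none, none, none⟩

abbrev Cfg := ℤ × ℤ → CellState

/-- Clause–literal incidence of a CNF formula. -/
abbrev CNF := ℤ → ℤ → Option Bool

/-- The position `p` lies inside the rectangle `[n+1] × [m+2]`. -/
def inside (n m : ℕ) (p : ℤ × ℤ) : Prop :=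
  0 ≤ p.1 ∧ p.1 ≤ (n : ℤ) ∧ 0 ≤ p.2 ∧ p.2 ≤ (m : ℤ) + 1

def rightN (p : ℤ × ℤ) : ℤ × ℤ := (p.1, p.2 + 1)
def leftN  (p : ℤ × ℤ) : ℤ × ℤ := (p.1, p.2 - 1)
def belowN (p : ℤ × ℤ) : ℤ × ℤ := (p.1 + 1, p.2)
def aboveN (p : ℤ × ℤ) : ℤ × ℤ := (p.1 - 1, p.2)

/-- `q` is a von Neumann neighbour of `p`. -/
def vnNbr (p q : ℤ × ℤ) : Prop :=
  q = rightN p ∨ q = leftN p ∨ q = belowN p ∨ q = aboveN p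

/-- The state set `S_{n,m}`: the seven classes (S1)–(S7). -/
def ValidState (n m : ℕ) (s : CellState) : Prop :=
  (∃ l : Bool, s = ⟨(some 0, some 0), none, none, none, none, some l⟩) ∨
  (∃ (i : ℤ) (l : Bool), 1 ≤ i ∧ i ≤ (n : ℤ) ∧
      s = ⟨(some i, some 0), none, none, none, none, some l⟩) ∨
  (∃ (j : ℤ) (a l : Bool), 1 ≤ j ∧ j ≤ (m : ℤ) ∧
      s = ⟨(some 0, some j), none, some a, none, none, some l⟩) ∨
  (∃ l : Bool, s = ⟨(some 0, some ((m : ℤ) + 1)), none, none, none, none, some l⟩) ∨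
  (∃ (i : ℤ) (pc l : Bool), 1 ≤ i ∧ i ≤ (n : ℤ) ∧
      s = ⟨(some i, some ((m : ℤ) + 1)), none, none, none, some pc, some l⟩) ∨
  (∃ (i j fl : ℤ) (a pd l : Bool), 1 ≤ i ∧ i ≤ (n : ℤ) ∧ 1 ≤ j ∧ j ≤ (m : ℤ) ∧
      (fl = -1 ∨ fl = 0 ∨ fl = 1) ∧
      s = ⟨(some i, some j), some fl, some a, some pd, none, some l⟩) ∨
  s = qState

/-- `C ∈ Config_{n,m}`. -/
def IsConfig (n m : ℕ) (C : Cfg) : Prop :=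
  (∀ p, ValidState n m (C p)) ∧
  (∀ p, inside n m p → C p ≠ qState) ∧
  (∀ p, ¬ inside n m p → C p = qState)

/-- The literal of clause `C_i` on variable `x_j` is satisfied by `a`. -/
def litSat (φ : CNF) (a : ℤ → Bool) (i j : ℤ) : Prop :=
  (φ i j = some true ∧ a j = true) ∨ (φ i j = some false ∧ a j = false)

/-- Clause `C_i` is satisfied by the assignment `a`. -/
def clauseSat (φ : CNF) (a : ℤ → Bool) (m : ℕ) (i : ℤ) : Prop :=
  ∃ j : ℤ, 1 ≤ j ∧ j ≤ (m : ℤ) ∧ litSat φ a i j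

/-- The CNF formula `φ` (with `n` clauses, `m` variables) is satisfiable. -/
def Satisfiable (φ : CNF) (n m : ℕ) : Prop :=
  ∃ a : ℤ → Bool, ∀ i : ℤ, 1 ≤ i → i ≤ (n : ℤ) → clauseSat φ a m i

/-- The cell at position `q` behaves correctly for theoretical index `idx`:
if `idx` is inside the rectangle its written coordinates are `idx`,
otherwise the cell is quiescent. -/
def nbrCoordOK (n m : ℕ) (C : Cfg) (q idx : ℤ × ℤ) : Prop :=
  (inside n m idx → (C q).coord = (some idx.1, some idx.2)) ∧
  (¬ inside n m idx → C q = qState)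

/-- (A) Index consistency. -/
def ruleA (n m : ℕ) (C : Cfg) (p : ℤ × ℤ) : Prop :=
  ∀ i j : ℤ, 0 ≤ i → i ≤ (n : ℤ) → 0 ≤ j → j ≤ (m : ℤ) + 1 →
    ((C p).coord = (some i, some j) ↔
      (nbrCoordOK n m C (rightN p) (i, j + 1) ∧
       nbrCoordOK n m C (leftN p) (i, j - 1) ∧
       nbrCoordOK n m C (belowN p) (i + 1, j) ∧
       nbrCoordOK n m C (aboveN p) (i - 1, j)))

/-- (B) Formula consistency. -/
def ruleB (φ : CNF) (n m : ℕ) (C : Cfg) (p : ℤ × ℤ) : Prop :=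
  ∀ i j : ℤ, (C p).coord = (some i, some j) →
    1 ≤ i → i ≤ (n : ℤ) → 1 ≤ j → j ≤ (m : ℤ) →
      (((C p).flag = some 1 ↔ φ i j = some true) ∧
       ((C p).flag = some (-1) ↔ φ i j = some false) ∧
       ((C p).flag = some 0 ↔ φ i j = none))

/-- (C1) the `a`-value is constant along columns `1 ≤ j ≤ m`. -/
def ruleC1 (n m : ℕ) (C : Cfg) (p : ℤ × ℤ) : Prop :=
  ∀ i j : ℤ, (C p).coord = (some i, some j) → 1 ≤ j → j ≤ (m : ℤ) →
    ((inside n m (aboveN p) → (C (aboveN p)).aval = (C p).aval) ∧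
     (inside n m (belowN p) → (C (belowN p)).aval = (C p).aval))

/-- (C2) partial conjunction recurrence for rows `r ≥ 2`. -/
def ruleC2 (n m : ℕ) (C : Cfg) (p : ℤ × ℤ) : Prop :=
  ∀ r : ℤ, (C p).coord = (some r, some ((m : ℤ) + 1)) → 2 ≤ r →
    ((C p).pc = some true ↔
      ((C (aboveN p)).pc = some true ∧ (C (leftN p)).pd = some true))

/-- (C3) partial conjunction base case. -/
def ruleC3 (n m : ℕ) (C : Cfg) (p : ℤ × ℤ) : Prop :=
  (C p).coord = (some 1, some ((m : ℤ) + 1)) →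
    ((C p).pc = some true ↔ (C (leftN p)).pd = some true)

/-- The literal written in the cell is satisfied:
`flag(s) = 1 ∧ a(s) = 1` or `flag(s) = −1 ∧ a(s) = 0`. -/
def litHolds (C : Cfg) (p : ℤ × ℤ) : Prop :=
  ((C p).flag = some 1 ∧ (C p).aval = some true) ∨
  ((C p).flag = some (-1) ∧ (C p).aval = some false)

/-- (D1) partial disjunction recurrence for columns `2 ≤ j ≤ m`. -/
def ruleD1 (n m : ℕ) (C : Cfg) (p : ℤ × ℤ) : Prop :=
  ∀ i j : ℤ, (C p).coord = (some i, some j) →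
    1 ≤ i → i ≤ (n : ℤ) → 2 ≤ j → j ≤ (m : ℤ) →
      ((C p).pd = some true ↔ ((C (leftN p)).pd = some true ∨ litHolds C p))

/-- (D2) partial disjunction base case. -/
def ruleD2 (n m : ℕ) (C : Cfg) (p : ℤ × ℤ) : Prop :=
  ∀ i : ℤ, (C p).coord = (some i, some 1) → 1 ≤ i → i ≤ (n : ℤ) →
    ((C p).pd = some true ↔ litHolds C p)

/-- (E) Technical conditions (E1)–(E4). -/
def ruleE (n m : ℕ) (C : Cfg) (p : ℤ × ℤ) : Prop :=
  ∀ i j : ℤ, (C p).coord = (some i, some j) →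
    (((j = 0 ∨ (i = 0 ∧ j = 0) ∨ (i = 0 ∧ j = (m : ℤ) + 1)) →
        (C p).flag = none ∧ (C p).aval = none ∧ (C p).pd = none ∧ (C p).pc = none) ∧
     ((i = 0 ∧ 1 ≤ j ∧ j ≤ (m : ℤ)) →
        (C p).flag = none ∧ (C p).pd = none ∧ (C p).pc = none) ∧
     ((j = (m : ℤ) + 1 ∧ 1 ≤ i) →
        (C p).flag = none ∧ (C p).aval = none ∧ (C p).pd = none) ∧
     ((1 ≤ i ∧ i ≤ (n : ℤ) ∧ 1 ≤ j ∧ j ≤ (m : ℤ)) → (C p).pc = none))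

/-- The cell of `C` at `p` is locally correct: rules (A)–(E). -/
def LocallyCorrect (φ : CNF) (n m : ℕ) (C : Cfg) (p : ℤ × ℤ) : Prop :=
  ruleA n m C p ∧ ruleB φ n m C p ∧ ruleC1 n m C p ∧ ruleC2 n m C p ∧
  ruleC3 n m C p ∧ ruleD1 n m C p ∧ ruleD2 n m C p ∧ ruleE n m C p

/-- The (non-quiescent) cell of `C` at `p` is blue: it is locally correct and,
if it is an output cell, its `pc` component is `1`.  A cell is red iff it is
not blue. -/
def Blue (φ : CNF) (n m : ℕ) (C : Cfg) (p : ℤ × ℤ) : Prop :=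
  C p ≠ qState ∧ LocallyCorrect φ n m C p ∧
  ((C p).coord = (some (n : ℤ), some ((m : ℤ) + 1)) → (C p).pc = some true)

open scoped Classical in
/-- The snake-like successor map on indices of the rectangle `[n+1] × [m+2]`. -/
noncomputable def suc (n m : ℕ) (p : ℤ × ℤ) : ℤ × ℤ :=
  if p = (0, 0) ∨ (Even p.1 ∧ 1 ≤ p.2 ∧ p.2 ≤ (m : ℤ)) then (p.1, p.2 + 1)
  else if p = ((n : ℤ), 1) ∨ (Odd p.1 ∧ 2 ≤ p.2 ∧ p.2 ≤ (m : ℤ) + 1) then (p.1, p.2 - 1)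
  else if (Odd p.1 ∧ p.2 = 1 ∧ p.1 ≠ (n : ℤ)) ∨ (Even p.1 ∧ p.2 = (m : ℤ) + 1) then
    (p.1 + 1, p.2)
  else (p.1 - 1, p.2)

/-- `q` is the successor cell of `p` in `C`: a von Neumann neighbour whose
written coordinates are `suc` of the written coordinates of `p`. -/
def IsSucc (n m : ℕ) (C : Cfg) (p q : ℤ × ℤ) : Prop :=
  vnNbr p q ∧ ∃ i j : ℤ, (C p).coord = (some i, some j) ∧
    (C q).coord = (some (suc n m (i, j)).1, some (suc n m (i, j)).2)

/-- The position of the successor cell of `p` (the geometric neighbour of `p`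
in the direction from the written coordinates of `p` to their `suc`). -/
noncomputable def succPos (n m : ℕ) (C : Cfg) (p : ℤ × ℤ) : ℤ × ℤ :=
  match (C p).coord with
  | (some i, some j) => (p.1 + ((suc n m (i, j)).1 - i), p.2 + ((suc n m (i, j)).2 - j))
  | _ => p

open scoped Classical in
/-- The global map of the cellular automaton `A_φ`: a blue cell replaces its
label by `label(s₁) XOR label(s_k)` where `s_k` is the state of its successor
cell; a red cell is unchanged. -/
noncomputable def step (φ : CNF) (n m : ℕ) (C : Cfg) : Cfg := fun p =>
  if Blue φ n m C p then
    { C p with label := Option.map₂ Bool.xor ((C p).label) ((C (succPos n m C p)).label) }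
  else C p

/-- `C ∼ C'`: the configurations agree on all state components except
possibly the labels. -/
def Similar (C C' : Cfg) : Prop :=
  ∀ p, (C p).coord = (C' p).coord ∧ (C p).flag = (C' p).flag ∧
    (C p).aval = (C' p).aval ∧ (C p).pd = (C' p).pd ∧ (C p).pc = (C' p).pc

/-- Encoding of clause–literal occurrence as flag value in `{−1, 0, 1}`. -/
def flagInt (o : Option Bool) : ℤ :=
  match o with
  | some true => 1
  | some false => -1
  | none => 0

/-- Truth value under `a` of the disjunction of the literals of `C_i`
among the variables `x₁, …, x_j`. -/
noncomputable def pdVal (φ : CNF) (a : ℤ → Bool) (i j : ℤ) : Bool :=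
  @decide (∃ u : ℤ, 1 ≤ u ∧ u ≤ j ∧ litSat φ a i u) (Classical.propDecidable _)

/-- Truth value under `a` of the partial conjunction `C₁ ∧ … ∧ C_i`. -/
noncomputable def pcVal (φ : CNF) (a : ℤ → Bool) (m : ℕ) (i : ℤ) : Bool :=
  @decide (∀ v : ℤ, 1 ≤ v → v ≤ i → clauseSat φ a m v) (Classical.propDecidable _)

open scoped Classical in
/-- The computation table `Table_φ(a)`, with all labels `0`. -/
noncomputable def Table (φ : CNF) (n m : ℕ) (a : ℤ → Bool) : Cfg := fun p =>
  if inside n m p then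
    { coord := (some p.1, some p.2)
      flag := if 1 ≤ p.1 ∧ p.1 ≤ (n : ℤ) ∧ 1 ≤ p.2 ∧ p.2 ≤ (m : ℤ) then
          some (flagInt (φ p.1 p.2)) else none
      aval := if 1 ≤ p.2 ∧ p.2 ≤ (m : ℤ) then some (a p.2) else none
      pd := if 1 ≤ p.1 ∧ p.1 ≤ (n : ℤ) ∧ 1 ≤ p.2 ∧ p.2 ≤ (m : ℤ) then
          some (pdVal φ a p.1 p.2) else none
      pc := if 1 ≤ p.1 ∧ p.1 ≤ (n : ℤ) ∧ p.2 = (m : ℤ) + 1 then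
          some (pcVal φ a m p.1) else none
      label := some false }
  else qState

end CA

section AuxStmt3
open CA

private lemma bool_ext' {b c : Bool} (h : (b = true) ↔ (c = true)) : b = c := by
  cases b <;> cases c <;> simp_all

private lemma pdVal_iff' (φ : CNF) (a : ℤ → Bool) (i j : ℤ) :
    pdVal φ a i j = true ↔ ∃ u : ℤ, 1 ≤ u ∧ u ≤ j ∧ litSat φ a i u := by
  unfold pdVal
  exact @decide_eq_true_iff _ (Classical.propDecidable _)

private lemma pdVal_zero' (φ : CNF) (a : ℤ → Bool) (i : ℤ) : pdVal φ a i 0 = false := by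
  cases h : pdVal φ a i 0 with
  | false => rfl
  | true =>
    obtain ⟨u, h1, h2, -⟩ := (pdVal_iff' φ a i 0).mp h
    omega

private lemma pdVal_rec' (φ : CNF) (a : ℤ → Bool) (i j : ℤ) (hj : 1 ≤ j) :
    (pdVal φ a i j = true ↔ (pdVal φ a i (j - 1) = true ∨ litSat φ a i j)) := by
  rw [pdVal_iff', pdVal_iff']
  constructor
  · rintro ⟨u, h1, h2, hL⟩
    by_cases hu : u = j
    · exact Or.inr (hu ▸ hL)
    · exact Or.inl ⟨u, h1, by omega, hL⟩
  · rintro (⟨u, h1, h2, hL⟩ | hL)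
    · exact ⟨u, h1, by omega, hL⟩
    · exact ⟨j, hj, le_refl j, hL⟩

private lemma pcVal_iff' (φ : CNF) (a : ℤ → Bool) (m : ℕ) (i : ℤ) :
    pcVal φ a m i = true ↔ ∀ v : ℤ, 1 ≤ v → v ≤ i → clauseSat φ a m v := by
  unfold pcVal
  exact @decide_eq_true_iff _ (Classical.propDecidable _)

private lemma pcVal_zero' (φ : CNF) (a : ℤ → Bool) (m : ℕ) : pcVal φ a m 0 = true := by
  rw [pcVal_iff']
  intro v h1 h2
  exfalso; omega

private lemma pcVal_rec' (φ : CNF) (a : ℤ → Bool) (m : ℕ) (i : ℤ) (hi : 1 ≤ i) :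
    (pcVal φ a m i = true ↔ (pcVal φ a m (i - 1) = true ∧ clauseSat φ a m i)) := by
  rw [pcVal_iff', pcVal_iff']
  constructor
  · intro h
    exact ⟨fun v h1 h2 => h v h1 (by omega), h i hi le_rfl⟩
  · rintro ⟨h, hi'⟩ v h1 h2
    by_cases hv : v = i
    · exact hv ▸ hi'
    · exact h v h1 (by omega)

private lemma clauseSat_iff' (φ : CNF) (a : ℤ → Bool) (m : ℕ) (i : ℤ) :
    clauseSat φ a m i ↔ pdVal φ a i m = true :=
  (pdVal_iff' φ a i (m : ℤ)).symm

end AuxStmt3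

open CA in
/-- If `C ∈ Config_{n,m}` is locally correct and its `0`th row
carries the assignment `a`, then `C ∼ Table_φ(a)`. -/
theorem stmt_3 (n m : ℕ) (hn : 1 ≤ n) (hnodd : Odd n) (hm : 1 ≤ m) (φ : CNF)
    (a : ℤ → Bool) (C : Cfg) (hC : IsConfig n m C)
    (hloc : ∀ p : ℤ × ℤ, inside n m p → LocallyCorrect φ n m C p)
    (hrow : ∀ (p : ℤ × ℤ) (j : ℤ), 1 ≤ j → j ≤ (m : ℤ) →
      (C p).coord = (some 0, some j) → (C p).aval = some (a j)) :
    Similar C (Table φ n m a) := by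
  obtain ⟨hvalid, hne, hq⟩ := hC
  have hn' : (1 : ℤ) ≤ (n : ℤ) := by exact_mod_cast hn
  have hm' : (1 : ℤ) ≤ (m : ℤ) := by exact_mod_cast hm
  -- every inside cell has some coordinates in range
  have hex : ∀ p : ℤ × ℤ, inside n m p → ∃ i j : ℤ, 0 ≤ i ∧ i ≤ (n : ℤ) ∧ 0 ≤ j ∧
      j ≤ (m : ℤ) + 1 ∧ (C p).coord = (some i, some j) := by
    intro p hp
    rcases hvalid p with ⟨l, h⟩ | ⟨i, l, hi1, hi2, h⟩ | ⟨j, av, l, hj1, hj2, h⟩ | ⟨l, h⟩ |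
      ⟨i, pcv, l, hi1, hi2, h⟩ | ⟨i, j, fl, av, pdv, l, hi1, hi2, hj1, hj2, hfl, h⟩ | h
    · exact ⟨0, 0, by omega, by omega, by omega, by omega, by rw [h]⟩
    · exact ⟨i, 0, by omega, by omega, by omega, by omega, by rw [h]⟩
    · exact ⟨0, j, by omega, by omega, by omega, by omega, by rw [h]⟩
    · exact ⟨0, (m : ℤ) + 1, by omega, by omega, by omega, by omega, by rw [h]⟩
    · exact ⟨i, (m : ℤ) + 1, by omega, by omega, by omega, by omega, by rw [h]⟩
    · exact ⟨i, j, by omega, by omega, by omega, by omega, by rw [h]⟩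
    · exact absurd h (hne p hp)
  -- the corner cell is indexed (0,0)
  have hcorner : (C (0, 0)).coord = (some 0, some 0) := by
    have hp : inside n m ((0 : ℤ), (0 : ℤ)) := ⟨le_refl 0, by omega, le_refl 0, by omega⟩
    obtain ⟨i, j, hi0, hin, hj0, hjm, hco⟩ := hex _ hp
    have h := ((hloc _ hp).1 i j hi0 hin hj0 hjm).mp hco
    have hj : j = 0 := by
      by_contra hne'
      have hin' : inside n m (i, j - 1) := ⟨hi0, hin, by omega, by omega⟩
      have h2 := h.2.1.1 hin'
      have hqq : C (leftN ((0 : ℤ), (0 : ℤ))) = qState := by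
        apply hq
        rintro ⟨-, -, h3, -⟩
        simp only [leftN] at h3
        omega
      rw [hqq] at h2
      simp [qState] at h2
    have hi : i = 0 := by
      by_contra hne'
      have hin' : inside n m (i - 1, j) := ⟨by omega, by omega, hj0, hjm⟩
      have h2 := h.2.2.2.1 hin'
      have hqq : C (aboveN ((0 : ℤ), (0 : ℤ))) = qState := by
        apply hq
        rintro ⟨h3, -, -, -⟩
        simp only [aboveN] at h3
        omega
      rw [hqq] at h2
      simp [qState] at h2
    rw [hco, hi, hj]
  -- coordinates propagate rightwards and downwards
  have hright : ∀ p : ℤ × ℤ, inside n m p → (C p).coord = (some p.1, some p.2) →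
      p.2 + 1 ≤ (m : ℤ) + 1 → (C (p.1, p.2 + 1)).coord = (some p.1, some (p.2 + 1)) := by
    intro p hp hco h2
    obtain ⟨b1, b2, b3, b4⟩ := id hp
    have h := ((hloc p hp).1 p.1 p.2 b1 b2 b3 b4).mp hco
    exact h.1.1 ⟨b1, b2, by omega, h2⟩
  have hbelow : ∀ p : ℤ × ℤ, inside n m p → (C p).coord = (some p.1, some p.2) →
      p.1 + 1 ≤ (n : ℤ) → (C (p.1 + 1, p.2)).coord = (some (p.1 + 1), some p.2) := by
    intro p hp hco h2
    obtain ⟨b1, b2, b3, b4⟩ := id hp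
    have h := ((hloc p hp).1 p.1 p.2 b1 b2 b3 b4).mp hco
    exact h.2.2.1.1 ⟨by omega, h2, b3, b4⟩
  -- row 0 is indexed correctly
  have hrow0 : ∀ j : ℤ, 0 ≤ j → j ≤ (m : ℤ) + 1 → (C (0, j)).coord = (some 0, some j) := by
    intro j hj
    refine Int.le_induction
      (motive := fun j _ => j ≤ (m : ℤ) + 1 → (C (0, j)).coord = (some 0, some j)) ?_ ?_ j hj
    · intro _
      exact hcorner
    · intro j hj ih hj1
      have hih := ih (by omega)
      exact hright ((0 : ℤ), j) ⟨le_refl 0, by omega, hj, by omega⟩ hih (by omega)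
  -- the whole grid is indexed correctly
  have hgrid : ∀ i : ℤ, 0 ≤ i → i ≤ (n : ℤ) → ∀ j : ℤ, 0 ≤ j → j ≤ (m : ℤ) + 1 →
      (C (i, j)).coord = (some i, some j) := by
    intro i hi
    refine Int.le_induction
      (motive := fun i _ => i ≤ (n : ℤ) → ∀ j : ℤ, 0 ≤ j → j ≤ (m : ℤ) + 1 →
        (C (i, j)).coord = (some i, some j)) ?_ ?_ i hi
    · intro _ j hj1 hj2
      exact hrow0 j hj1 hj2
    · intro i hi ih hi1 j hj1 hj2
      have hih := ih (by omega) j hj1 hj2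
      exact hbelow (i, j) ⟨hi, by omega, hj1, hj2⟩ hih hi1
  have Hcoord : ∀ p : ℤ × ℤ, inside n m p → (C p).coord = (some p.1, some p.2) := by
    intro p hp
    obtain ⟨h1, h2, h3, h4⟩ := hp
    have := hgrid p.1 h1 h2 p.2 h3 h4
    simpa using this
  -- shape lemmas
  have hS6 : ∀ p : ℤ × ℤ, inside n m p → 1 ≤ p.1 → 1 ≤ p.2 → p.2 ≤ (m : ℤ) →
      (∃ pdv : Bool, (C p).pd = some pdv) ∧ (C p).pc = none := by
    intro p hp h1 h2 h3
    have hco := Hcoord p hp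
    rcases hvalid p with ⟨l, h⟩ | ⟨i, l, hi1, hi2, h⟩ | ⟨j, av, l, hj1, hj2, h⟩ | ⟨l, h⟩ |
      ⟨i, pcv, l, hi1, hi2, h⟩ | ⟨i, j, fl, av, pdv, l, hi1, hi2, hj1, hj2, hfl, h⟩ | h
    · simp only [h, Prod.mk.injEq, Option.some.injEq] at hco; omega
    · simp only [h, Prod.mk.injEq, Option.some.injEq] at hco; omega
    · simp only [h, Prod.mk.injEq, Option.some.injEq] at hco; omega
    · simp only [h, Prod.mk.injEq, Option.some.injEq] at hco; omega
    · simp only [h, Prod.mk.injEq, Option.some.injEq] at hco; omega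
    · exact ⟨⟨pdv, by rw [h]⟩, by rw [h]⟩
    · exact absurd h (hne p hp)
  have hS5 : ∀ p : ℤ × ℤ, inside n m p → 1 ≤ p.1 → p.2 = (m : ℤ) + 1 →
      (C p).flag = none ∧ (C p).aval = none ∧ (C p).pd = none ∧
      ∃ pcv : Bool, (C p).pc = some pcv := by
    intro p hp h1 h2
    have hco := Hcoord p hp
    rcases hvalid p with ⟨l, h⟩ | ⟨i, l, hi1, hi2, h⟩ | ⟨j, av, l, hj1, hj2, h⟩ | ⟨l, h⟩ |
      ⟨i, pcv, l, hi1, hi2, h⟩ | ⟨i, j, fl, av, pdv, l, hi1, hi2, hj1, hj2, hfl, h⟩ | h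
    · simp only [h, Prod.mk.injEq, Option.some.injEq] at hco; omega
    · simp only [h, Prod.mk.injEq, Option.some.injEq] at hco; omega
    · simp only [h, Prod.mk.injEq, Option.some.injEq] at hco; omega
    · simp only [h, Prod.mk.injEq, Option.some.injEq] at hco; omega
    · exact ⟨by rw [h], by rw [h], by rw [h], pcv, by rw [h]⟩
    · simp only [h, Prod.mk.injEq, Option.some.injEq] at hco; omega
    · exact absurd h (hne p hp)
  have hTop : ∀ p : ℤ × ℤ, inside n m p → p.1 = 0 →
      (C p).flag = none ∧ (C p).pd = none ∧ (C p).pc = none := by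
    intro p hp h1
    have hco := Hcoord p hp
    rcases hvalid p with ⟨l, h⟩ | ⟨i, l, hi1, hi2, h⟩ | ⟨j, av, l, hj1, hj2, h⟩ | ⟨l, h⟩ |
      ⟨i, pcv, l, hi1, hi2, h⟩ | ⟨i, j, fl, av, pdv, l, hi1, hi2, hj1, hj2, hfl, h⟩ | h
    · exact ⟨by rw [h], by rw [h], by rw [h]⟩
    · exact ⟨by rw [h], by rw [h], by rw [h]⟩
    · exact ⟨by rw [h], by rw [h], by rw [h]⟩
    · exact ⟨by rw [h], by rw [h], by rw [h]⟩
    · simp only [h, Prod.mk.injEq, Option.some.injEq] at hco; omega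
    · simp only [h, Prod.mk.injEq, Option.some.injEq] at hco; omega
    · exact absurd h (hne p hp)
  have hJ0 : ∀ p : ℤ × ℤ, inside n m p → p.2 = 0 →
      (C p).flag = none ∧ (C p).pd = none ∧ (C p).pc = none := by
    intro p hp h1
    have hco := Hcoord p hp
    rcases hvalid p with ⟨l, h⟩ | ⟨i, l, hi1, hi2, h⟩ | ⟨j, av, l, hj1, hj2, h⟩ | ⟨l, h⟩ |
      ⟨i, pcv, l, hi1, hi2, h⟩ | ⟨i, j, fl, av, pdv, l, hi1, hi2, hj1, hj2, hfl, h⟩ | h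
    · exact ⟨by rw [h], by rw [h], by rw [h]⟩
    · exact ⟨by rw [h], by rw [h], by rw [h]⟩
    · simp only [h, Prod.mk.injEq, Option.some.injEq] at hco; omega
    · simp only [h, Prod.mk.injEq, Option.some.injEq] at hco; omega
    · simp only [h, Prod.mk.injEq, Option.some.injEq] at hco; omega
    · simp only [h, Prod.mk.injEq, Option.some.injEq] at hco; omega
    · exact absurd h (hne p hp)
  have hAvalNone : ∀ p : ℤ × ℤ, inside n m p → ¬(1 ≤ p.2 ∧ p.2 ≤ (m : ℤ)) →
      (C p).aval = none := by
    intro p hp h1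
    have hco := Hcoord p hp
    rcases hvalid p with ⟨l, h⟩ | ⟨i, l, hi1, hi2, h⟩ | ⟨j, av, l, hj1, hj2, h⟩ | ⟨l, h⟩ |
      ⟨i, pcv, l, hi1, hi2, h⟩ | ⟨i, j, fl, av, pdv, l, hi1, hi2, hj1, hj2, hfl, h⟩ | h
    · rw [h]
    · rw [h]
    · simp only [h, Prod.mk.injEq, Option.some.injEq] at hco; omega
    · rw [h]
    · rw [h]
    · simp only [h, Prod.mk.injEq, Option.some.injEq] at hco; omega
    · exact absurd h (hne p hp)
  -- the assignment row propagates down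
  have Haval : ∀ p : ℤ × ℤ, inside n m p → 1 ≤ p.2 → p.2 ≤ (m : ℤ) →
      (C p).aval = some (a p.2) := by
    have key : ∀ i : ℤ, 0 ≤ i → ∀ j : ℤ, i ≤ (n : ℤ) → 1 ≤ j → j ≤ (m : ℤ) →
        (C (i, j)).aval = some (a j) := by
      intro i hi
      refine Int.le_induction
        (motive := fun i _ => ∀ j : ℤ, i ≤ (n : ℤ) → 1 ≤ j → j ≤ (m : ℤ) →
          (C (i, j)).aval = some (a j)) ?_ ?_ i hi
      · intro j _ h2 h3
        exact hrow ((0 : ℤ), j) j h2 h3 (Hcoord ((0 : ℤ), j) ⟨le_refl 0, by omega, by omega, by omega⟩)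
      · intro i hi ih j h1 h2 h3
        have hp : inside n m ((i + 1 : ℤ), j) := ⟨by omega, h1, by omega, by omega⟩
        have hc1 := ((hloc _ hp).2.2.1 (i + 1) j (Hcoord _ hp) h2 h3).1
        have hup : inside n m (aboveN ((i + 1 : ℤ), j)) := by
          simp only [aboveN]
          exact ⟨by omega, by omega, by omega, by omega⟩
        have heq : aboveN ((i + 1 : ℤ), j) = (i, j) := by
          simp only [aboveN]
          norm_num
        rw [heq] at hc1
        have := hc1 (heq ▸ hup)
        rw [← this]
        exact ih j (by omega) h2 h3
    intro p hp h1 h2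
    have := key p.1 hp.1 p.2 hp.2.1 h1 h2
    simpa using this
  -- the flag components encode the formula
  have Hflag : ∀ p : ℤ × ℤ, inside n m p → 1 ≤ p.1 → 1 ≤ p.2 → p.2 ≤ (m : ℤ) →
      (C p).flag = some (flagInt (φ p.1 p.2)) := by
    intro p hp h1 h2 h3
    have hB := (hloc p hp).2.1 p.1 p.2 (Hcoord p hp) h1 hp.2.1 h2 h3
    cases hφ : φ p.1 p.2 with
    | none => exact hB.2.2.mpr hφ
    | some b =>
      cases b with
      | true => exact hB.1.mpr hφ
      | false => exact hB.2.1.mpr hφ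
  have Hlit : ∀ p : ℤ × ℤ, inside n m p → 1 ≤ p.1 → 1 ≤ p.2 → p.2 ≤ (m : ℤ) →
      (litHolds C p ↔ litSat φ a p.1 p.2) := by
    intro p hp h1 h2 h3
    unfold litHolds litSat
    rw [Hflag p hp h1 h2 h3, Haval p hp h2 h3]
    cases hφ : φ p.1 p.2 with
    | none => cases ha : a p.2 <;> simp [flagInt]
    | some b => cases b <;> cases ha : a p.2 <;> simp [flagInt]
  -- partial disjunctions
  have Hpd : ∀ p : ℤ × ℤ, inside n m p → 1 ≤ p.1 → p.1 ≤ (n : ℤ) → 1 ≤ p.2 → p.2 ≤ (m : ℤ) →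
      (C p).pd = some (pdVal φ a p.1 p.2) := by
    have key : ∀ j : ℤ, 1 ≤ j → j ≤ (m : ℤ) → ∀ i : ℤ, 1 ≤ i → i ≤ (n : ℤ) →
        (C (i, j)).pd = some (pdVal φ a i j) := by
      intro j hj
      refine Int.le_induction
        (motive := fun j _ => j ≤ (m : ℤ) → ∀ i : ℤ, 1 ≤ i → i ≤ (n : ℤ) →
          (C (i, j)).pd = some (pdVal φ a i j)) ?_ ?_ j hj
      · intro _ i h1 h2
        have hp : inside n m (i, (1 : ℤ)) := ⟨by omega, h2, by omega, by omega⟩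
        obtain ⟨⟨pdv, hpd⟩, -⟩ := hS6 (i, (1 : ℤ)) hp h1 (le_refl 1) hm'
        have hD2 := (hloc _ hp).2.2.2.2.2.2.1 i (Hcoord _ hp) h1 h2
        rw [hpd] at hD2 ⊢
        simp only [Option.some.injEq] at hD2 ⊢
        apply bool_ext'
        rw [hD2, Hlit (i, (1 : ℤ)) hp h1 (le_refl 1) hm']
        rw [pdVal_rec' φ a i 1 le_rfl]
        simp [show (1 : ℤ) - 1 = 0 by norm_num, pdVal_zero']
      · intro j hj ih hjm i h1 h2
        have hp : inside n m (i, j + 1) := ⟨by omega, h2, by omega, by omega⟩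
        obtain ⟨⟨pdv, hpd⟩, -⟩ := hS6 (i, j + 1) hp h1 (by omega) hjm
        have hD1 := (hloc _ hp).2.2.2.2.2.1 i (j + 1) (Hcoord _ hp) h1 h2 (by omega) hjm
        have hleft : leftN (i, j + 1) = (i, j) := by
          simp only [leftN]
          norm_num
        rw [hleft, ih (by omega) i h1 h2] at hD1
        rw [hpd] at hD1 ⊢
        simp only [Option.some.injEq] at hD1 ⊢
        apply bool_ext'
        rw [hD1, Hlit (i, j + 1) hp h1 (by omega) hjm]
        rw [pdVal_rec' φ a i (j + 1) (by omega)]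
        simp only [show j + 1 - 1 = j by ring]
    intro p hp h1 h2 h3 h4
    have := key p.2 h3 h4 p.1 h1 h2
    simpa using this
  -- partial conjunctions
  have Hpc : ∀ p : ℤ × ℤ, inside n m p → 1 ≤ p.1 → p.2 = (m : ℤ) + 1 →
      (C p).pc = some (pcVal φ a m p.1) := by
    have key : ∀ i : ℤ, 1 ≤ i → i ≤ (n : ℤ) → (C (i, (m : ℤ) + 1)).pc = some (pcVal φ a m i) := by
      intro i hi
      refine Int.le_induction
        (motive := fun i _ => i ≤ (n : ℤ) → (C (i, (m : ℤ) + 1)).pc = some (pcVal φ a m i)) ?_ ?_ i hi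
      · intro h2
        have hp : inside n m ((1 : ℤ), (m : ℤ) + 1) := ⟨by omega, h2, by omega, le_refl _⟩
        obtain ⟨-, -, -, pcv, hpc⟩ := hS5 _ hp (le_refl 1) rfl
        have hC3 := (hloc _ hp).2.2.2.2.1 (Hcoord _ hp)
        have hleft : leftN ((1 : ℤ), (m : ℤ) + 1) = ((1 : ℤ), (m : ℤ)) := by
          simp only [leftN]
          norm_num
        have hpL : inside n m ((1 : ℤ), (m : ℤ)) := ⟨by omega, h2, by omega, by omega⟩
        rw [hleft, Hpd _ hpL (le_refl 1) h2 hm' (le_refl _)] at hC3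
        rw [hpc] at hC3 ⊢
        simp only [Option.some.injEq] at hC3 ⊢
        apply bool_ext'
        rw [hC3, pcVal_rec' φ a m 1 le_rfl]
        simp [show (1 : ℤ) - 1 = 0 by norm_num, pcVal_zero', clauseSat_iff']
      · intro i hi ih h2
        have hp : inside n m ((i + 1 : ℤ), (m : ℤ) + 1) := ⟨by omega, h2, by omega, le_refl _⟩
        obtain ⟨-, -, -, pcv, hpc⟩ := hS5 _ hp (by omega) rfl
        have hC2 := (hloc _ hp).2.2.2.1 (i + 1) (Hcoord _ hp) (by omega)
        have habove : aboveN ((i + 1 : ℤ), (m : ℤ) + 1) = (i, (m : ℤ) + 1) := by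
          simp only [aboveN]
          norm_num
        have hleft : leftN ((i + 1 : ℤ), (m : ℤ) + 1) = ((i + 1 : ℤ), (m : ℤ)) := by
          simp only [leftN]
          norm_num
        have hpL : inside n m ((i + 1 : ℤ), (m : ℤ)) := ⟨by omega, h2, by omega, by omega⟩
        rw [habove, hleft, ih (by omega), Hpd _ hpL (by omega) h2 hm' (le_refl _)] at hC2
        rw [hpc] at hC2 ⊢
        simp only [Option.some.injEq] at hC2 ⊢
        apply bool_ext'
        rw [hC2, pcVal_rec' φ a m (i + 1) (by omega)]
        simp only [show i + 1 - 1 = i by ring, clauseSat_iff']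
    intro p hp h1 h2
    have hp2 : p = (p.1, (m : ℤ) + 1) := by
      rw [← h2]
    rw [hp2]
    exact key p.1 h1 (hp2 ▸ hp).2.1
  -- conclusion
  intro p
  by_cases hp : inside n m p
  · have hco := Hcoord p hp
    have hb1 := hp.1
    have hb2 := hp.2.1
    have hb3 := hp.2.2.1
    have hb4 := hp.2.2.2
    simp only [Table, if_pos hp]
    refine ⟨hco, ?_, ?_, ?_, ?_⟩
    · by_cases h6 : 1 ≤ p.1 ∧ p.1 ≤ (n : ℤ) ∧ 1 ≤ p.2 ∧ p.2 ≤ (m : ℤ)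
      · rw [if_pos h6]
        exact Hflag p hp h6.1 h6.2.2.1 h6.2.2.2
      · rw [if_neg h6]
        have hcase : p.1 = 0 ∨ p.2 = 0 ∨ p.2 = (m : ℤ) + 1 := by omega
        rcases hcase with h | h | h
        · exact (hTop p hp h).1
        · exact (hJ0 p hp h).1
        · by_cases h0 : p.1 = 0
          · exact (hTop p hp h0).1
          · exact (hS5 p hp (by omega) h).1
    · by_cases ha : 1 ≤ p.2 ∧ p.2 ≤ (m : ℤ)
      · rw [if_pos ha]
        exact Haval p hp ha.1 ha.2
      · rw [if_neg ha]
        exact hAvalNone p hp ha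
    · by_cases h6 : 1 ≤ p.1 ∧ p.1 ≤ (n : ℤ) ∧ 1 ≤ p.2 ∧ p.2 ≤ (m : ℤ)
      · rw [if_pos h6]
        exact Hpd p hp h6.1 h6.2.1 h6.2.2.1 h6.2.2.2
      · rw [if_neg h6]
        have hcase : p.1 = 0 ∨ p.2 = 0 ∨ p.2 = (m : ℤ) + 1 := by omega
        rcases hcase with h | h | h
        · exact (hTop p hp h).2.1
        · exact (hJ0 p hp h).2.1
        · by_cases h0 : p.1 = 0
          · exact (hTop p hp h0).2.1
          · exact (hS5 p hp (by omega) h).2.2.1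
    · by_cases hc : 1 ≤ p.1 ∧ p.1 ≤ (n : ℤ) ∧ p.2 = (m : ℤ) + 1
      · rw [if_pos hc]
        exact Hpc p hp hc.1 hc.2.2
      · rw [if_neg hc]
        have hcase : p.1 = 0 ∨ p.2 = 0 ∨ (1 ≤ p.2 ∧ p.2 ≤ (m : ℤ)) := by omega
        rcases hcase with h | h | h
        · exact (hTop p hp h).2.2
        · exact (hJ0 p hp h).2.2
        · by_cases h0 : p.1 = 0
          · exact (hTop p hp h0).2.2
          · exact (hS6 p hp (by omega) h.1 h.2).2
  · rw [hq p hp]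
    simp [Table, if_neg hp, qState]
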